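/- arXiv:1802.09828 — 2 statements merged into one kernel-verified Lean document; each statement's English description precedes it below -/
import Mathlib

section
/- Fix ε with 0 < ε ≤ 1/100, a constant γ ≥ 10, and τ ≥ 1 types. The number of configurations C with fixed speed s(C)=s and fixed weight bound w(C)=w is at most τ·(2/ε)^{(2γ+1)²·log_{1+ε}(1/ε)}. -/
set_option maxHeartbeats 1000000 in
/-- A configuration with fixed speed `s` and weight bound `w` is modeled by its
remaining data: a type `t : Fin τ`, a natural number `k` with `r = k * (ε * w)`,
and a finitely supported function `ℓ : ℤ →₀ ℕ` counting large jobs of each size. -/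
theorem stmt_6 (ε γ w : ℝ) (τ : ℕ) (hε : 0 < ε) (hε1 : ε ≤ 1 / 100)
    (hγ : 10 ≤ γ) (hτ : 1 ≤ τ) (hw : 0 < w) :
    (Set.ncard {c : Fin τ × ℕ × (ℤ →₀ ℕ) |
        (c.2.1 : ℝ) * (ε * w) < (1 + ε) ^ 3 * w ∧
        (∀ ν ∈ c.2.2.support, ε ^ γ * w ≤ (1 + ε) ^ ν) ∧
        (c.2.1 : ℝ) * (ε * w) + ∑ ν ∈ c.2.2.support, (1 + ε) ^ ν * (c.2.2 ν : ℝ)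
          ≤ (1 + ε) ^ 3 * w} : ℝ)
      ≤ τ * (2 / ε) ^ ((2 * γ + 1) ^ 2 * Real.logb (1 + ε) (1 / ε)) := by
  classical
  have hb1 : (1 : ℝ) < 1 + ε := by linarith
  have hb0 : (0 : ℝ) < 1 + ε := by linarith
  have hεγ : (0 : ℝ) < ε ^ γ := Real.rpow_pos_of_pos hε γ
  have hεγ1 : ε ^ γ ≤ 1 := Real.rpow_le_one hε.le (by linarith) (by linarith)
  set L : ℝ := Real.logb (1 + ε) (1 / ε) with hLdef
  have hεinv : (100 : ℝ) ≤ 1 / ε := (le_div_iff₀ hε).mpr (by linarith)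
  have hL1 : (1 : ℝ) ≤ L := by
    rw [hLdef, Real.le_logb_iff_rpow_le hb1 (by linarith : (0:ℝ) < 1 / ε), Real.rpow_one]
    linarith
  -- bounds defining the ambient finite set
  set a : ℝ := Real.logb (1 + ε) (ε ^ γ * w) with hadef
  set b : ℝ := Real.logb (1 + ε) ((1 + ε) ^ 3 * w) with hbdef
  set M : ℕ := ⌊(1 + ε) ^ 3 / ε ^ γ⌋₊ with hMdef
  set B : ℕ := ⌈(1 + ε) ^ 3 / ε⌉₊ with hBdef
  set νs : Finset ℤ := Finset.Icc ⌈a⌉ ⌊b⌋ with hνdef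
  set T : Finset (Fin τ × ℕ × (ℤ →₀ ℕ)) :=
    Finset.univ ×ˢ (Finset.range B ×ˢ νs.finsupp fun _ => Finset.range (M + 1)) with hTdef
  have hsub : {c : Fin τ × ℕ × (ℤ →₀ ℕ) |
        (c.2.1 : ℝ) * (ε * w) < (1 + ε) ^ 3 * w ∧
        (∀ ν ∈ c.2.2.support, ε ^ γ * w ≤ (1 + ε) ^ ν) ∧
        (c.2.1 : ℝ) * (ε * w) + ∑ ν ∈ c.2.2.support, (1 + ε) ^ ν * (c.2.2 ν : ℝ)
          ≤ (1 + ε) ^ 3 * w} ⊆ ↑T := by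
    rintro ⟨t, k, f⟩ ⟨h1, h2, h3⟩
    simp only [Set.mem_setOf_eq] at h1 h2 h3
    have hterm : ∀ ν ∈ f.support, (1 + ε) ^ ν * (f ν : ℝ) ≤ (1 + ε) ^ 3 * w := by
      intro ν hν
      have hpos : (0 : ℝ) ≤ (k : ℝ) * (ε * w) :=
        mul_nonneg (Nat.cast_nonneg k) (mul_nonneg hε.le hw.le)
      have h := Finset.single_le_sum
        (f := fun i => (1 + ε) ^ i * (f i : ℝ))
        (fun i _ => mul_nonneg (zpow_pos hb0 i).le (Nat.cast_nonneg _)) hν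
      linarith
    simp only [hTdef, Finset.coe_product, Set.mem_prod, Finset.mem_coe, Finset.mem_univ,
      true_and, Finset.mem_range, Finset.mem_coe]
    constructor
    · -- k < B
      rw [hBdef, Nat.lt_ceil, lt_div_iff₀ hε]
      have hkw : (k : ℝ) * ε * w < (1 + ε) ^ 3 * w := by
        have : (k : ℝ) * ε * w = (k : ℝ) * (ε * w) := by ring
        linarith [this ▸ h1]
      exact lt_of_mul_lt_mul_right hkw hw.le
    · rw [Finset.mem_finsupp_iff]
      constructor
      · intro ν hν
        have hl : ε ^ γ * w ≤ (1 + ε) ^ ν := h2 ν hν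
        have hf1 : (1 : ℝ) ≤ (f ν : ℝ) := by
          exact_mod_cast Nat.one_le_iff_ne_zero.mpr (Finsupp.mem_support_iff.mp hν)
        have hu : (1 + ε) ^ ν ≤ (1 + ε) ^ 3 * w := by
          have h := hterm ν hν
          nlinarith [zpow_pos hb0 ν]
        rw [hνdef, Finset.mem_Icc]
        constructor
        · rw [Int.ceil_le, hadef]
          calc Real.logb (1 + ε) (ε ^ γ * w) ≤ Real.logb (1 + ε) ((1 + ε) ^ ν) :=
                Real.logb_le_logb_of_le hb1 (mul_pos hεγ hw) hl
            _ = ν := by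
              rw [Real.logb, Real.log_zpow, mul_div_assoc,
                div_self (Real.log_pos hb1).ne']
              ring
        · rw [Int.le_floor, hbdef]
          calc (ν : ℝ) = Real.logb (1 + ε) ((1 + ε) ^ ν) := by
                rw [Real.logb, Real.log_zpow, mul_div_assoc,
                  div_self (Real.log_pos hb1).ne']; ring
            _ ≤ Real.logb (1 + ε) ((1 + ε) ^ 3 * w) :=
                Real.logb_le_logb_of_le hb1 (zpow_pos hb0 ν) hu
      · intro ν hν
        rw [Finset.mem_range, Nat.lt_succ_iff]
        by_cases hs : ν ∈ f.support
        · rw [hMdef, Nat.le_floor_iff (div_nonneg (pow_nonneg hb0.le 3) hεγ.le)]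
          have hl : ε ^ γ * w ≤ (1 + ε) ^ ν := h2 ν hs
          have h := hterm ν hs
          rw [le_div_iff₀ hεγ]
          have hf0 : (0 : ℝ) ≤ (f ν : ℝ) := Nat.cast_nonneg _
          have hfle : ε ^ γ * w * (f ν : ℝ) ≤ (1 + ε) ^ 3 * w :=
            le_trans (mul_le_mul_of_nonneg_right hl hf0) h
          calc (f ν : ℝ) * ε ^ γ = ε ^ γ * w * (f ν) / w := by field_simp
            _ ≤ (1 + ε) ^ 3 * w / w := div_le_div_of_nonneg_right hfle hw.le
            _ = (1 + ε) ^ 3 := by field_simp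
        · simp [Finsupp.notMem_support_iff.mp hs]
  have hcard : Set.ncard {c : Fin τ × ℕ × (ℤ →₀ ℕ) |
        (c.2.1 : ℝ) * (ε * w) < (1 + ε) ^ 3 * w ∧
        (∀ ν ∈ c.2.2.support, ε ^ γ * w ≤ (1 + ε) ^ ν) ∧
        (c.2.1 : ℝ) * (ε * w) + ∑ ν ∈ c.2.2.support, (1 + ε) ^ ν * (c.2.2 ν : ℝ)
          ≤ (1 + ε) ^ 3 * w} ≤ T.card := by
    have := Set.ncard_le_ncard hsub T.finite_toSet
    simpa [Set.ncard_coe_finset] using this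
  have hTcard : T.card = τ * (B * (M + 1) ^ νs.card) := by
    rw [hTdef, Finset.card_product, Finset.card_product, Finset.card_univ,
      Fintype.card_fin, Finset.card_finsupp]
    simp [Finset.prod_const]
  -- now the real inequality
  set P : ℝ := 2 / ε with hPdef
  have hP1 : (1 : ℝ) ≤ P := by
    rw [hPdef, le_div_iff₀ hε]; linarith
  have hP0 : (0 : ℝ) < P := lt_of_lt_of_le one_pos hP1
  -- bound on B
  have hB : (B : ℝ) ≤ P ^ (2 : ℝ) := by
    have h2 : P ^ (2 : ℝ) = 4 / ε ^ 2 := by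
      rw [show (2:ℝ) = ((2:ℕ):ℝ) by norm_num, Real.rpow_natCast, hPdef, div_pow]
      norm_num
    rw [h2, le_div_iff₀ (pow_pos hε 2)]
    have h1 : (B : ℝ) < (1 + ε) ^ 3 / ε + 1 :=
      Nat.ceil_lt_add_one (div_nonneg (pow_nonneg hb0.le 3) hε.le)
    have h5 : (B : ℝ) * ε ^ 2 < ((1 + ε) ^ 3 / ε + 1) * ε ^ 2 :=
      mul_lt_mul_of_pos_right h1 (pow_pos hε 2)
    have hid : ((1 + ε) ^ 3 / ε + 1) * ε ^ 2 = (1 + ε) ^ 3 * ε + ε ^ 2 := by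
      field_simp
    have h4 : (1 + ε) ^ 3 ≤ 2 := by
      calc (1 + ε) ^ 3 ≤ (1 + 1/100 : ℝ) ^ 3 := by
            apply pow_le_pow_left₀ hb0.le; linarith
        _ ≤ 2 := by norm_num
    have h6 : (1 + ε) ^ 3 * ε ≤ 2 * ε := mul_le_mul_of_nonneg_right h4 hε.le
    nlinarith [sq_nonneg ε]
  -- bound on M + 1
  have hM : ((M : ℝ) + 1) ≤ P ^ γ := by
    have h1 : (M : ℝ) ≤ (1 + ε) ^ 3 / ε ^ γ :=
      Nat.floor_le (div_nonneg (pow_nonneg hb0.le 3) hεγ.le)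
    have h4 : (1 + ε) ^ 3 ≤ 2 := by
      calc (1 + ε) ^ 3 ≤ (1 + 1/100 : ℝ) ^ 3 := by
            apply pow_le_pow_left₀ hb0.le; linarith
        _ ≤ 2 := by norm_num
    have h5 : (M : ℝ) ≤ 2 / ε ^ γ :=
      h1.trans (div_le_div_of_nonneg_right h4 hεγ.le)
    have h2 : P ^ γ = 2 ^ γ / ε ^ γ := by
      rw [hPdef, Real.div_rpow (by norm_num) hε.le]
    have h3 : (1024 : ℝ) ≤ 2 ^ γ := by
      calc (1024 : ℝ) = 2 ^ (10 : ℝ) := by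
            rw [show (10:ℝ) = ((10:ℕ):ℝ) by norm_num, Real.rpow_natCast]; norm_num
        _ ≤ 2 ^ γ := Real.rpow_le_rpow_of_exponent_le (by norm_num) hγ
    have h6 : (1024 : ℝ) / ε ^ γ ≤ 2 ^ γ / ε ^ γ := div_le_div_of_nonneg_right h3 hεγ.le
    have h7 : (1 : ℝ) ≤ 1022 / ε ^ γ := by
      rw [le_div_iff₀ hεγ]; linarith
    have h8 : (1024 : ℝ) / ε ^ γ = 2 / ε ^ γ + 1022 / ε ^ γ := by ring
    rw [h2]
    linarith
  -- bound on the number of ν values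
  have hV : (νs.card : ℝ) ≤ γ * L + 4 := by
    have hγL : (0 : ℝ) ≤ γ * L := mul_nonneg (by linarith) (by linarith)
    have hba : b - a = 3 + γ * L := by
      rw [hbdef, hadef, hLdef, Real.logb_mul (pow_pos hb0 3).ne' hw.ne',
        Real.logb_mul hεγ.ne' hw.ne', Real.logb_pow,
        Real.logb_self_eq_one hb1, Real.logb_rpow_eq_mul_logb_of_pos hε,
        one_div, Real.logb_inv]
      ring
    rw [hνdef, Int.card_Icc]
    rcases le_or_gt ⌈a⌉ (⌊b⌋ + 1) with h | h
    · have h1 : ((⌊b⌋ + 1 - ⌈a⌉).toNat : ℝ) = ((⌊b⌋ : ℝ) + 1 - ⌈a⌉) := by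
        have := Int.toNat_of_nonneg (by omega : (0:ℤ) ≤ ⌊b⌋ + 1 - ⌈a⌉)
        exact_mod_cast congrArg (Int.cast : ℤ → ℝ) this
      rw [h1]
      have h2 := Int.floor_le b
      have h3 := Int.le_ceil a
      linarith
    · have h1 : (⌊b⌋ + 1 - ⌈a⌉).toNat = 0 := by omega
      rw [h1]
      push_cast
      linarith
  -- combine
  have main : (T.card : ℝ) ≤ τ * P ^ ((2 * γ + 1) ^ 2 * L) := by
    calc (T.card : ℝ) = τ * ((B : ℝ) * ((M : ℝ) + 1) ^ νs.card) := by
          rw [hTcard]; push_cast; ring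
      _ ≤ τ * (P ^ (2:ℝ) * (P ^ γ) ^ νs.card) := by
          have hpow : ((M : ℝ) + 1) ^ νs.card ≤ (P ^ γ) ^ νs.card :=
            pow_le_pow_left₀ (by positivity) hM νs.card
          have := mul_le_mul hB hpow (by positivity) (by positivity)
          exact mul_le_mul_of_nonneg_left this (Nat.cast_nonneg τ)
      _ = τ * P ^ ((2:ℝ) + γ * νs.card) := by
          rw [← Real.rpow_natCast (P ^ γ) νs.card, ← Real.rpow_mul hP0.le,
            ← Real.rpow_add hP0]
      _ ≤ τ * P ^ ((2 * γ + 1) ^ 2 * L) := by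
          have hVγ : γ * (νs.card : ℝ) ≤ γ * (γ * L + 4) :=
            mul_le_mul_of_nonneg_left hV (by linarith)
          have hexp : (2:ℝ) + γ * νs.card ≤ (2 * γ + 1) ^ 2 * L := by
            nlinarith [mul_nonneg (by nlinarith : (0:ℝ) ≤ 3*γ^2 + 4*γ + 1)
              (by linarith : (0:ℝ) ≤ L - 1)]
          exact mul_le_mul_of_nonneg_left
            (Real.rpow_le_rpow_of_exponent_le hP1 hexp) (Nat.cast_nonneg τ)
  exact le_trans (by exact_mod_cast hcard) main
end

section
/- Let jobs of sizes in {(1+ε)^ζ : ζ ∈ ℤ} with counts ñ(ζ) ∈ ℤ≥0, and bins (machines) each with a capacity value of the form r(C)+2ε·w(C), sorted so that bins are in non-increasing order of w(C) and jobs in non-decreasing order of size. If for every integer ζ: Σ_{ζ' ≥ ζ} ñ(ζ')·(1+ε)^{ζ'} ≤ Σ_{bins with ε^γ·w(C) > (1+ε)^ζ} (r(C)+2ε·w(C)), then the Next-Fit heuristic (closing each bin once its content exceeds r(C)+2εw(C)) packs all jobs, assigning each job of size (1+ε)^ζ only to bins with ε^γ·w(C) > (1+ε)^ζ. -/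
open Finset


open MeasureTheory

noncomputable def Bf {M : ℕ} (cap : Fin M → ℝ) (m : ℕ) : ℝ :=
  ∑ b ∈ Finset.univ.filter (fun b : Fin M => (b : ℕ) < m), cap b

lemma Bf_mono {M : ℕ} (cap : Fin M → ℝ) (h0 : ∀ b, 0 ≤ cap b) : Monotone (Bf cap) := by
  intro m m' hm
  apply Finset.sum_le_sum_of_subset_of_nonneg
  · intro b hb
    simp only [Finset.mem_filter, Finset.mem_univ, true_and] at hb ⊢
    omega
  · intro b _ _; exact h0 b

lemma Bf_zero {M : ℕ} (cap : Fin M → ℝ) : Bf cap 0 = 0 := by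
  simp [Bf]

lemma Bf_top {M : ℕ} (cap : Fin M → ℝ) : Bf cap M = ∑ b, cap b := by
  unfold Bf
  congr 1
  apply Finset.filter_true_of_mem
  intro b _; exact b.isLt

lemma Bf_succ {M : ℕ} (cap : Fin M → ℝ) (b : Fin M) :
    Bf cap ((b : ℕ) + 1) = Bf cap (b : ℕ) + cap b := by
  unfold Bf
  have h : Finset.univ.filter (fun b' : Fin M => (b' : ℕ) < (b : ℕ) + 1)
      = insert b (Finset.univ.filter (fun b' : Fin M => (b' : ℕ) < (b : ℕ))) := by
    ext b'
    simp only [Finset.mem_filter, Finset.mem_univ, true_and, Finset.mem_insert, Fin.ext_iff]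
    omega
  rw [h, Finset.sum_insert (by simp)]
  ring

lemma exists_window {M : ℕ} (cap : Fin M → ℝ) (h0 : ∀ b, 0 ≤ cap b) {x : ℝ}
    (hx0 : 0 ≤ x) (hxM : x < Bf cap M) :
    ∃ b : Fin M, Bf cap (b : ℕ) ≤ x ∧ x < Bf cap ((b : ℕ) + 1) := by
  classical
  have hM : 0 < M := by
    rcases Nat.eq_zero_or_pos M with h | h
    · exfalso
      subst h
      rw [Bf_zero] at hxM; linarith
    · exact h
  have hM1 : M - 1 + 1 = M := by omega
  have hex : ∃ m, x < Bf cap (m + 1) := ⟨M - 1, by rwa [hM1]⟩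
  set m₀ := Nat.find hex with hm₀
  have hspec : x < Bf cap (m₀ + 1) := Nat.find_spec hex
  have hm₀M : m₀ < M := by
    have : m₀ ≤ M - 1 := Nat.find_le (by rwa [hM1])
    omega
  refine ⟨⟨m₀, hm₀M⟩, ?_, hspec⟩
  show Bf cap m₀ ≤ x
  rcases Nat.eq_zero_or_pos m₀ with h | h
  · rw [h, Bf_zero]; exact hx0
  · have hm1 : m₀ - 1 + 1 = m₀ := by omega
    have hmin : ¬ x < Bf cap ((m₀ - 1) + 1) := Nat.find_min hex (by omega)
    rw [hm1] at hmin
    exact le_of_not_gt hmin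

noncomputable def Gf (size : ℤ → ℝ) (n : ℤ →₀ ℕ) (ζ : ℤ) : ℝ :=
  ∑ ζ' ∈ n.support.filter (fun ζ' => ζ < ζ'), (n ζ' : ℝ) * size ζ'

noncomputable def Xf (size : ℤ → ℝ) (n : ℤ →₀ ℕ) (ζ : ℤ) (k : ℕ) : ℝ :=
  Gf size n ζ + k * size ζ

lemma Gf_nonneg (size : ℤ → ℝ) (hsize : ∀ ζ, 0 < size ζ) (n : ℤ →₀ ℕ) (ζ : ℤ) :
    0 ≤ Gf size n ζ := by
  apply Finset.sum_nonneg
  intro ζ' _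
  have := (hsize ζ').le
  positivity

lemma Gf_add (size : ℤ → ℝ) (n : ℤ →₀ ℕ) {ζ : ℤ} (hζ : ζ ∈ n.support) :
    Gf size n ζ + (n ζ : ℝ) * size ζ
      = ∑ ζ' ∈ n.support.filter (fun ζ' => ζ ≤ ζ'), (n ζ' : ℝ) * size ζ' := by
  have h : n.support.filter (fun ζ' => ζ ≤ ζ')
      = insert ζ (n.support.filter (fun ζ' => ζ < ζ')) := by
    ext ζ'
    simp only [Finset.mem_filter, Finset.mem_insert]
    constructor
    · rintro ⟨h1, h2⟩
      rcases eq_or_lt_of_le h2 with h3 | h3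
      · exact Or.inl h3.symm
      · exact Or.inr ⟨h1, h3⟩
    · rintro (rfl | ⟨h1, h2⟩)
      · exact ⟨hζ, le_refl _⟩
      · exact ⟨h1, le_of_lt h2⟩
  rw [h, Finset.sum_insert (by simp)]
  rw [Gf]
  ring

lemma Gf_gap (size : ℤ → ℝ) (hsize : ∀ ζ, 0 < size ζ) (n : ℤ →₀ ℕ) {ζ ζ' : ℤ}
    (hζ' : ζ' ∈ n.support) (hlt : ζ < ζ') :
    Gf size n ζ' + (n ζ' : ℝ) * size ζ' ≤ Gf size n ζ := by
  rw [Gf_add size n hζ']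
  apply Finset.sum_le_sum_of_subset_of_nonneg
  · intro z hz
    simp only [Finset.mem_filter] at hz ⊢
    exact ⟨hz.1, lt_of_lt_of_le hlt hz.2⟩
  · intro z _ _
    have := hsize z
    positivity

lemma pack_aux (M : ℕ) (cap u slack : Fin M → ℝ)
    (hcap0 : ∀ b, 0 ≤ cap b) (hslack0 : ∀ b, 0 ≤ slack b)
    (hu : Antitone u) (hus : ∀ b, u b ≤ slack b)
    (size : ℤ → ℝ) (hsize : ∀ ζ, 0 < size ζ)
    (n : ℤ →₀ ℕ)
    (hcap : ∀ ζ : ℤ,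
      ∑ ζ' ∈ n.support.filter (fun ζ' => ζ ≤ ζ'), (n ζ' : ℝ) * size ζ'
        ≤ ∑ b ∈ Finset.univ.filter (fun b => size ζ < u b), cap b) :
    ∃ a : ℤ → Fin M → ℕ,
      (∀ ζ : ℤ, ∑ b, a ζ b = n ζ) ∧
      (∀ ζ : ℤ, ∀ b, a ζ b ≠ 0 → size ζ < u b) ∧
      (∀ b, ∑ ζ ∈ n.support, size ζ * (a ζ b : ℝ) ≤ cap b + slack b) := by
  classical
  set X : ℤ → ℕ → ℝ := Xf size n with hX
  set a : ℤ → Fin M → ℕ := fun ζ b =>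
    ((Finset.range (n ζ)).filter
      (fun k => Bf cap (b : ℕ) ≤ X ζ k ∧ X ζ k < Bf cap ((b : ℕ) + 1))).card with ha
  -- key upper bound on job end positions
  have hXcap : ∀ ζ ∈ n.support, ∀ k, k < n ζ →
      X ζ k + size ζ ≤ ∑ b ∈ Finset.univ.filter (fun b => size ζ < u b), cap b := by
    intro ζ hζ k hk
    have h1 : X ζ k + size ζ ≤ Gf size n ζ + (n ζ : ℝ) * size ζ := by
      rw [hX]
      unfold Xf
      have hk1 : (k : ℝ) + 1 ≤ (n ζ : ℝ) := by exact_mod_cast hk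
      nlinarith [hsize ζ]
    calc X ζ k + size ζ ≤ Gf size n ζ + (n ζ : ℝ) * size ζ := h1
      _ = ∑ ζ' ∈ n.support.filter (fun ζ' => ζ ≤ ζ'), (n ζ' : ℝ) * size ζ' :=
          Gf_add size n hζ
      _ ≤ _ := hcap ζ
  have hX0 : ∀ ζ k, 0 ≤ X ζ k := by
    intro ζ k
    have h1 := Gf_nonneg size hsize n ζ
    have h2 := (hsize ζ).le
    rw [hX]; unfold Xf
    positivity
  -- admissibility
  have hadm : ∀ ζ : ℤ, ∀ b, a ζ b ≠ 0 → size ζ < u b := by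
    intro ζ b hab
    rw [ha] at hab
    obtain ⟨k, hk⟩ := Finset.card_pos.mp (Nat.pos_of_ne_zero hab)
    simp only [Finset.mem_filter, Finset.mem_range] at hk
    obtain ⟨hkn, hbk, _⟩ := hk
    have hζ : ζ ∈ n.support := Finsupp.mem_support_iff.mpr (by omega)
    by_contra hcontra
    have hsub : Finset.univ.filter (fun b' => size ζ < u b')
        ⊆ Finset.univ.filter (fun b' : Fin M => (b' : ℕ) < (b : ℕ)) := by
      intro b' hb'
      simp only [Finset.mem_filter, Finset.mem_univ, true_and] at hb' ⊢
      by_contra hge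
      have hle : b ≤ b' := by
        rw [Fin.le_def]; omega
      exact hcontra (lt_of_lt_of_le hb' (hu hle))
    have h1 : ∑ b' ∈ Finset.univ.filter (fun b' => size ζ < u b'), cap b'
        ≤ Bf cap (b : ℕ) :=
      Finset.sum_le_sum_of_subset_of_nonneg hsub (fun b' _ _ => hcap0 b')
    have h2 := hXcap ζ hζ k hkn
    have h3 := hsize ζ
    linarith
  refine ⟨a, ?_, hadm, ?_⟩
  · -- all jobs packed
    intro ζ
    by_cases hζ : ζ ∈ n.support
    · have key : ∀ k ∈ Finset.range (n ζ), ∃ b₀ : Fin M,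
          (Bf cap (b₀ : ℕ) ≤ X ζ k ∧ X ζ k < Bf cap ((b₀ : ℕ) + 1)) ∧
          ∀ b : Fin M, (Bf cap (b : ℕ) ≤ X ζ k ∧ X ζ k < Bf cap ((b : ℕ) + 1)) → b = b₀ := by
        intro k hk
        rw [Finset.mem_range] at hk
        have hxM : X ζ k < Bf cap M := by
          have h1 := hXcap ζ hζ k hk
          have h2 : ∑ b ∈ Finset.univ.filter (fun b => size ζ < u b), cap b
              ≤ ∑ b, cap b :=
            Finset.sum_le_sum_of_subset_of_nonneg (Finset.filter_subset _ _)
              (fun b _ _ => hcap0 b)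
          rw [Bf_top]
          have := hsize ζ
          linarith
        obtain ⟨b₀, hb₀1, hb₀2⟩ := exists_window cap hcap0 (hX0 ζ k) hxM
        refine ⟨b₀, ⟨hb₀1, hb₀2⟩, ?_⟩
        intro b ⟨h1, h2⟩
        by_contra hne
        have hcoe : (b : ℕ) ≠ (b₀ : ℕ) := fun h => hne (Fin.ext h)
        rcases Nat.lt_or_ge (b : ℕ) (b₀ : ℕ) with h | h
        · have : Bf cap ((b : ℕ) + 1) ≤ Bf cap (b₀ : ℕ) := Bf_mono cap hcap0 (by omega)
          linarith
        · have : Bf cap ((b₀ : ℕ) + 1) ≤ Bf cap (b : ℕ) := Bf_mono cap hcap0 (by omega)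
          linarith
      calc ∑ b, a ζ b
          = ∑ b : Fin M, ∑ k ∈ Finset.range (n ζ),
              (if Bf cap (b : ℕ) ≤ X ζ k ∧ X ζ k < Bf cap ((b : ℕ) + 1) then 1 else 0) := by
            apply Finset.sum_congr rfl
            intro b _
            rw [ha]
            exact Finset.card_filter _ _
        _ = ∑ k ∈ Finset.range (n ζ), ∑ b : Fin M,
              (if Bf cap (b : ℕ) ≤ X ζ k ∧ X ζ k < Bf cap ((b : ℕ) + 1) then 1 else 0) :=
            Finset.sum_comm
        _ = ∑ k ∈ Finset.range (n ζ), 1 := by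
            apply Finset.sum_congr rfl
            intro k hk
            obtain ⟨b₀, hb₀, huniq⟩ := key k hk
            rw [Finset.sum_eq_single_of_mem b₀ (Finset.mem_univ _)]
            · exact if_pos hb₀
            · intro b _ hne
              exact if_neg (fun h => hne (huniq b h))
        _ = n ζ := by simp
    · rw [Finsupp.notMem_support_iff] at hζ
      rw [hζ]
      apply Finset.sum_eq_zero
      intro b _
      rw [ha]
      simp [hζ]
  · -- capacity bound
    intro b
    set Jb := n.support.sigma (fun ζ => (Finset.range (n ζ)).filter
      (fun k => Bf cap (b : ℕ) ≤ X ζ k ∧ X ζ k < Bf cap ((b : ℕ) + 1))) with hJb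
    have hcontent : ∑ ζ ∈ n.support, size ζ * (a ζ b : ℝ) = ∑ p ∈ Jb, size p.1 := by
      rw [hJb, Finset.sum_sigma]
      apply Finset.sum_congr rfl
      intro ζ _
      have h : ∑ _k ∈ (Finset.range (n ζ)).filter
          (fun k => Bf cap (b : ℕ) ≤ X ζ k ∧ X ζ k < Bf cap ((b : ℕ) + 1)), size ζ
          = size ζ * (a ζ b : ℝ) := by
        rw [Finset.sum_const, ha, nsmul_eq_mul, mul_comm]
      exact h.symm
    rw [hcontent]
    -- separation of job intervals
    have hsep : ∀ p ∈ Jb, ∀ q ∈ Jb, p ≠ q →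
        X p.1 p.2 + size p.1 ≤ X q.1 q.2 ∨ X q.1 q.2 + size q.1 ≤ X p.1 p.2 := by
      have hmem : ∀ p : Σ _ : ℤ, ℕ, p ∈ Jb → p.1 ∈ n.support ∧ p.2 < n p.1 := by
        intro p hp
        rw [hJb, Finset.mem_sigma] at hp
        obtain ⟨h1, h2⟩ := hp
        simp only [Finset.mem_filter, Finset.mem_range] at h2
        exact ⟨h1, h2.1⟩
      have horder : ∀ ζ₁ k₁ ζ₂ k₂, ζ₂ ∈ n.support → k₂ < n ζ₂ →
          (ζ₁ < ζ₂ ∨ (ζ₁ = ζ₂ ∧ k₂ < k₁)) → X ζ₂ k₂ + size ζ₂ ≤ X ζ₁ k₁ := by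
        intro ζ₁ k₁ ζ₂ k₂ hζ₂ hk₂ hcase
        rcases hcase with h | ⟨rfl, h⟩
        · have h1 : X ζ₂ k₂ + size ζ₂ ≤ Gf size n ζ₂ + (n ζ₂ : ℝ) * size ζ₂ := by
            rw [hX]; unfold Xf
            have hk1 : (k₂ : ℝ) + 1 ≤ (n ζ₂ : ℝ) := by exact_mod_cast hk₂
            nlinarith [hsize ζ₂]
          have h2 := Gf_gap size hsize n hζ₂ h
          have h3 : Gf size n ζ₁ ≤ X ζ₁ k₁ := by
            rw [hX]; unfold Xf
            have h4 : 0 ≤ (k₁ : ℝ) * size ζ₁ := by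
              have := (hsize ζ₁).le
              positivity
            linarith
          linarith
        · rw [hX]; unfold Xf
          have hk1 : (k₂ : ℝ) + 1 ≤ (k₁ : ℝ) := by exact_mod_cast h
          have h5 : ((k₂ : ℝ) + 1) * size ζ₁ ≤ (k₁ : ℝ) * size ζ₁ :=
            mul_le_mul_of_nonneg_right hk1 (hsize ζ₁).le
          linarith [hsize ζ₁]
      intro p hp q hq hne
      obtain ⟨hp1, hp2⟩ := hmem p hp
      obtain ⟨hq1, hq2⟩ := hmem q hq
      rcases lt_trichotomy p.1 q.1 with h | h | h
      · exact Or.inr (horder p.1 p.2 q.1 q.2 hq1 hq2 (Or.inl h))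
      · rcases lt_trichotomy p.2 q.2 with h2 | h2 | h2
        · exact Or.inl (horder q.1 q.2 p.1 p.2 hp1 hp2 (Or.inr ⟨h.symm, h2⟩))
        · exact absurd (Sigma.ext h (heq_of_eq h2)) hne
        · exact Or.inr (horder p.1 p.2 q.1 q.2 hq1 hq2 (Or.inr ⟨h, h2⟩))
      · exact Or.inl (horder q.1 q.2 p.1 p.2 hp1 hp2 (Or.inl h))
    set I : (Σ _ : ℤ, ℕ) → Set ℝ :=
      fun p => Set.Ico (X p.1 p.2) (X p.1 p.2 + size p.1) with hI
    have hd : (↑Jb : Set ((_ : ℤ) × ℕ)).PairwiseDisjoint I := by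
      intro p hp q hq hne
      have hs := hsep p (Finset.mem_coe.mp hp) q (Finset.mem_coe.mp hq) hne
      simp only [Function.onFun, hI]
      apply Set.disjoint_left.mpr
      intro t ht1 ht2
      simp only [Set.mem_Ico] at ht1 ht2
      rcases hs with h | h <;> linarith [ht1.1, ht1.2, ht2.1, ht2.2]
    have hmeas := MeasureTheory.measure_biUnion_finset (μ := volume) hd
      (fun p _ => measurableSet_Ico)
    have hss : (⋃ p ∈ Jb, I p)
        ⊆ Set.Ico (Bf cap (b : ℕ)) (Bf cap ((b : ℕ) + 1) + slack b) := by
      apply Set.iUnion₂_subset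
      intro p hp
      have hp' := hp
      rw [hJb, Finset.mem_sigma] at hp'
      obtain ⟨hp1, hp2⟩ := hp'
      simp only [Finset.mem_filter, Finset.mem_range] at hp2
      have hap : a p.1 b ≠ 0 := by
        rw [ha]
        exact Finset.card_ne_zero_of_mem
          (Finset.mem_filter.mpr ⟨Finset.mem_range.mpr hp2.1, hp2.2⟩)
      have hsz : size p.1 ≤ slack b := le_trans (hadm p.1 b hap).le (hus b)
      rw [hI]
      apply Set.Ico_subset_Ico hp2.2.1
      linarith [hp2.2.2]
    have hle : ENNReal.ofReal (∑ p ∈ Jb, size p.1)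
        ≤ ENNReal.ofReal (Bf cap ((b : ℕ) + 1) + slack b - Bf cap (b : ℕ)) := by
      calc ENNReal.ofReal (∑ p ∈ Jb, size p.1)
          = ∑ p ∈ Jb, ENNReal.ofReal (size p.1) :=
            ENNReal.ofReal_sum_of_nonneg (fun p _ => (hsize p.1).le)
        _ = ∑ p ∈ Jb, volume (I p) := by
            apply Finset.sum_congr rfl
            intro p _
            rw [hI, Real.volume_Ico]
            congr 1
            ring
        _ = volume (⋃ p ∈ Jb, I p) := hmeas.symm
        _ ≤ volume (Set.Ico (Bf cap (b : ℕ)) (Bf cap ((b : ℕ) + 1) + slack b)) :=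
            measure_mono hss
        _ = ENNReal.ofReal (Bf cap ((b : ℕ) + 1) + slack b - Bf cap (b : ℕ)) :=
            Real.volume_Ico
    have hnn : 0 ≤ Bf cap ((b : ℕ) + 1) + slack b - Bf cap (b : ℕ) := by
      rw [Bf_succ]
      have := hcap0 b
      have := hslack0 b
      linarith
    have hfin := (ENNReal.ofReal_le_ofReal_iff hnn).mp hle
    have hbs := Bf_succ cap b
    linarith


theorem stmt_15 (ε γ : ℝ) (hε : 0 < ε) (hε1 : ε ≤ 1 / 100) (hγ : 10 ≤ γ)
    (M : ℕ) (w r : Fin M → ℝ) (hw : ∀ b, 0 ≤ w b) (hr : ∀ b, 0 ≤ r b)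
    (hsorted : Antitone w)  -- bins sorted in non-increasing order of weight
    (ntil : ℤ →₀ ℕ)  -- job counts: `ntil ζ` jobs of size `(1+ε)^ζ`
    (hcap : ∀ ζ : ℤ,
      ∑ ζ' ∈ ntil.support.filter (fun ζ' => ζ ≤ ζ'), (ntil ζ' : ℝ) * (1 + ε) ^ ζ'
        ≤ ∑ b ∈ Finset.univ.filter (fun b => (1 + ε) ^ ζ < ε ^ γ * w b),
            (r b + 2 * ε * w b)) :
    ∃ a : ℤ → Fin M → ℕ,
      -- all jobs are packed
      (∀ ζ : ℤ, ∑ b, a ζ b = ntil ζ) ∧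
      -- each job of size (1+ε)^ζ goes only to bins for which it is small
      (∀ ζ : ℤ, ∀ b, a ζ b ≠ 0 → (1 + ε) ^ ζ < ε ^ γ * w b) ∧
      -- each bin's content exceeds its capacity value by less than one small item
      (∀ b, ∑ ζ ∈ ntil.support, (1 + ε) ^ ζ * (a ζ b : ℝ) ≤ r b + 3 * ε * w b) := by
  have hεγ : ε ^ γ ≤ ε := by
    calc ε ^ γ ≤ ε ^ (1 : ℝ) :=
          Real.rpow_le_rpow_of_exponent_ge hε (by linarith) (by linarith)
      _ = ε := Real.rpow_one ε
  have hcap0 : ∀ b, 0 ≤ r b + 2 * ε * w b := by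
    intro b
    have := hw b
    have := hr b
    nlinarith
  have hslack0 : ∀ b : Fin M, 0 ≤ ε * w b := fun b => by
    have := hw b; positivity
  have hu : Antitone (fun b : Fin M => ε ^ γ * w b) := by
    intro b b' hbb'
    have h1 : w b' ≤ w b := hsorted hbb'
    have h2 : (0 : ℝ) ≤ ε ^ γ := Real.rpow_nonneg hε.le γ
    exact mul_le_mul_of_nonneg_left h1 h2
  have hus : ∀ b : Fin M, ε ^ γ * w b ≤ ε * w b := fun b =>
    mul_le_mul_of_nonneg_right hεγ (hw b)
  have hsize : ∀ ζ : ℤ, (0 : ℝ) < (1 + ε) ^ ζ := fun ζ => zpow_pos (by linarith) ζ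
  obtain ⟨a, h1, h2, h3⟩ := pack_aux M (fun b => r b + 2 * ε * w b)
    (fun b => ε ^ γ * w b) (fun b => ε * w b) hcap0 hslack0 hu hus
    (fun ζ => (1 + ε) ^ ζ) hsize ntil hcap
  refine ⟨a, h1, h2, ?_⟩
  intro b
  have h := h3 b
  have heq : r b + 2 * ε * w b + ε * w b = r b + 3 * ε * w b := by ring
  linarith
end
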